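/- Let a, b, c, d, p, q, r be real numbers with a > 0, b > 0, c ≥ 0, d ≥ 0, p ≥ 0, r ≥ 0, q > 0, q ≥ |p − r| and a·b ≥ c·d. Define f(u,v) = u^r v^p (a v^q − c u^q) and g(u,v) = v^r u^p (b u^q − d v^q) for u, v ≥ 0, and let K > 0 be the unique constant with (f(u,v) − K g(u,v))·(u − K v) ≤ 0 for all u, v ≥ 0. If a·b > c·d then a − c·K^q > 0 and b·K^q − d > 0; if a·b = c·d then a − c·K^q = 0 and b·K^q − d = 0. -/
import Mathlib


/-- if a·b > c·d then a − c·K^q > 0 and b·K^q − d > 0;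
if a·b = c·d then both quantities vanish. -/
theorem stmt_3 (a b c d p q r : ℝ)
    (ha : 0 < a) (hb : 0 < b) (hc : 0 ≤ c) (hd : 0 ≤ d)
    (hp : 0 ≤ p) (hr : 0 ≤ r) (hq : 0 < q) (hqpr : |p - r| ≤ q)
    (habcd : c * d ≤ a * b) (K : ℝ) (hK : 0 < K)
    (hKprop : ∀ u v : ℝ, 0 ≤ u → 0 ≤ v →
      (u ^ r * v ^ p * (a * v ^ q - c * u ^ q)
        - K * (v ^ r * u ^ p * (b * u ^ q - d * v ^ q))) * (u - K * v) ≤ 0) :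
    (c * d < a * b → 0 < a - c * K ^ q ∧ 0 < b * K ^ q - d) ∧
    (a * b = c * d → a - c * K ^ q = 0 ∧ b * K ^ q - d = 0) := by
  set φ : ℝ → ℝ := fun u => u ^ r * (a - c * u ^ q) - K * (u ^ p * (b * u ^ q - d)) with hφ
  have key : ∀ u : ℝ, 0 ≤ u → φ u * (u - K) ≤ 0 := by
    intro u hu
    have := hKprop u 1 hu zero_le_one
    simpa [hφ, Real.one_rpow] using this
  have cr : ContinuousAt (fun u : ℝ => u ^ r) K :=
    Real.continuousAt_rpow_const K r (Or.inl hK.ne')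
  have cp : ContinuousAt (fun u : ℝ => u ^ p) K :=
    Real.continuousAt_rpow_const K p (Or.inl hK.ne')
  have cq : ContinuousAt (fun u : ℝ => u ^ q) K :=
    Real.continuousAt_rpow_const K q (Or.inl hK.ne')
  have hcont : ContinuousAt φ K := by
    exact (cr.mul (continuousAt_const.sub (continuousAt_const.mul cq))).sub
      (continuousAt_const.mul (cp.mul ((continuousAt_const.mul cq).sub continuousAt_const)))
  have hle : φ K ≤ 0 := by
    refine le_of_tendsto (hcont.continuousWithinAt.tendsto (s := Set.Ioi K)) ?_
    refine eventually_nhdsWithin_of_forall (fun u hu => ?_)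
    have huK : K < u := hu
    have h := key u (le_of_lt (hK.trans huK))
    nlinarith [h, sub_pos.mpr huK]
  have hge : 0 ≤ φ K := by
    refine ge_of_tendsto (hcont.continuousWithinAt.tendsto (s := Set.Iio K)) ?_
    have h1 : ∀ᶠ u in nhdsWithin K (Set.Iio K), 0 < u :=
      ((isOpen_Ioi.eventually_mem hK).filter_mono nhdsWithin_le_nhds)
    have h2 : ∀ᶠ u in nhdsWithin K (Set.Iio K), u < K := eventually_mem_nhdsWithin
    filter_upwards [h1, h2] with u hu1 hu2
    have h := key u hu1.le
    nlinarith [h, sub_pos.mpr hu2]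
  have hzero : φ K = 0 := le_antisymm hle hge
  have hEq : K ^ r * (a - c * K ^ q) = K * (K ^ p * (b * K ^ q - d)) := by
    have := hzero
    simp only [hφ] at this
    linarith
  have hKr : 0 < K ^ r := Real.rpow_pos_of_pos hK r
  have hKp : 0 < K ^ p := Real.rpow_pos_of_pos hK p
  have hKq : 0 < K ^ q := Real.rpow_pos_of_pos hK q
  constructor
  · intro hlt
    have hA : 0 < a - c * K ^ q := by
      by_contra hA
      push_neg at hA
      have hB : b * K ^ q - d ≤ 0 := by
        by_contra hB
        push_neg at hB
        nlinarith [mul_nonpos_of_nonneg_of_nonpos hKr.le hA,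
          mul_pos hK (mul_pos hKp hB)]
      -- a ≤ c K^q, b K^q ≤ d ⇒ a b K^q ≤ c d K^q ⇒ a b ≤ c d, contradiction
      nlinarith [mul_le_mul_of_nonneg_right hA hKq.le, mul_pos ha hb,
        mul_le_mul_of_nonneg_left hB ha.le, mul_le_mul_of_nonneg_right hB hc,
        mul_le_mul_of_nonneg_left hA hd]
    have hB : 0 < b * K ^ q - d := by
      by_contra hB
      push_neg at hB
      nlinarith [mul_pos hKr hA, mul_nonpos_of_nonneg_of_nonpos (mul_pos hK hKp).le hB]
    exact ⟨hA, hB⟩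
  · intro heq
    have hA : a - c * K ^ q = 0 := by
      rcases lt_trichotomy (a - c * K ^ q) 0 with h | h | h
      · have hB : b * K ^ q - d < 0 := by
          by_contra hB
          push_neg at hB
          nlinarith [mul_neg_of_pos_of_neg hKr h,
            mul_nonneg (mul_pos hK hKp).le hB]
        -- a < c K^q, b K^q < d, so a b K^q < c d K^q
        nlinarith [mul_lt_mul_of_pos_left hB ha, mul_lt_mul_of_pos_right h (mul_pos hb hKq),
          mul_le_mul_of_nonneg_right h.le hd, mul_pos hb hKq]
      · exact h
      · have hB : 0 < b * K ^ q - d := by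
          by_contra hB
          push_neg at hB
          nlinarith [mul_pos hKr h, mul_nonpos_of_nonneg_of_nonpos (mul_pos hK hKp).le hB]
        have hca : c * K ^ q < a := by linarith
        have hdb : d < b * K ^ q := by linarith
        have t1 : c * K ^ q * d ≤ a * d := mul_le_mul_of_nonneg_right hca.le hd
        have t2 : a * d < a * (b * K ^ q) := mul_lt_mul_of_pos_left hdb ha
        have t3 : a * (b * K ^ q) = c * K ^ q * d := by
          rw [show a * (b * K ^ q) = (a * b) * K ^ q from by ring, heq]; ring
        linarith
    have hB : b * K ^ q - d = 0 := by
      have : K * (K ^ p * (b * K ^ q - d)) = 0 := by rw [← hEq, hA, mul_zero]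
      have := mul_eq_zero.mp this
      rcases this with h | h
      · exact absurd h hK.ne'
      · rcases mul_eq_zero.mp h with h | h
        · exact absurd h hKp.ne'
        · exact h
    exact ⟨hA, hB⟩
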